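/- arXiv:2103.16071 — 2 statements merged into one kernel-verified Lean document; each statement's English description precedes it below -/
import Mathlib

section
/- Let x ∈ ℝᵈ not lie on any of the segments, and let r be a real number with 0 < r ≤ min_{1≤i≤n} dist(x, s_i). Then Ê(x) ⊆ C(x, r) ⊆ Ê^{√2}(x), where Ê^{√2}(x) is the homothety of Ê(x) about x with ratio √2. -/
noncomputable section

open Metric Set MeasureTheory
open scoped InnerProductSpace Classical

variable {d n : ℕ}

/-- The capsule `C_s(x,r)` induced by a single segment `s = [a,b]` with unit
direction vector `v`.  If the nearest point of `s` to `x` is an endpoint, it is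
the closed ball of radius `max r (dist x s)`; otherwise it is the intersection
of the infinite closed cylinder of radius `max r (dist x s)` whose axis is the
line through `x` parallel to `v` with the closed ball of radius
`max r (min ‖x-a‖ ‖x-b‖)`. -/
def capsuleSeg (a b v x : EuclideanSpace ℝ (Fin d)) (r : ℝ) :
    Set (EuclideanSpace ℝ (Fin d)) :=
  if Metric.infDist x (segment ℝ a b) = min (dist x a) (dist x b) then
    Metric.closedBall x (max r (Metric.infDist x (segment ℝ a b)))
  else
    {y | ‖(y - x) - ⟪y - x, v⟫_ℝ • v‖ ≤ max r (Metric.infDist x (segment ℝ a b))} ∩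
      Metric.closedBall x (max r (min (dist x a) (dist x b)))

/-- The capsule `C(x,r)` of the family of segments `s i = [a i, b i]`. -/
def capsuleFam (a b v : Fin n → EuclideanSpace ℝ (Fin d))
    (x : EuclideanSpace ℝ (Fin d)) (r : ℝ) : Set (EuclideanSpace ℝ (Fin d)) :=
  ⋂ i, capsuleSeg (a i) (b i) (v i) x r

/-- Image of a set under the homothety (central scaling) centered at `x` with ratio `lam`. -/
def scaleAbout (x : EuclideanSpace ℝ (Fin d)) (lam : ℝ)
    (C : Set (EuclideanSpace ℝ (Fin d))) : Set (EuclideanSpace ℝ (Fin d)) :=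
  (AffineMap.homothety x lam) '' C

/-- Local feature size: the distance from `x` to its second-nearest segment. -/
def lfs (a b : Fin n → EuclideanSpace ℝ (Fin d)) (x : EuclideanSpace ℝ (Fin d)) : ℝ :=
  sInf {t | ∃ i j : Fin n, i < j ∧
    t = max (Metric.infDist x (segment ℝ (a i) (b i)))
            (Metric.infDist x (segment ℝ (a j) (b j)))}

/-- `D_i(x)`: half the squared distance from `x` to the segment `[a,b]`. -/
def Dseg (a b x : EuclideanSpace ℝ (Fin d)) : ℝ :=
  Metric.infDist x (segment ℝ a b) ^ 2 / 2

/-- `D•_i(x)`: half the squared distance from `x` to the nearest endpoint. -/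
def Dbullet (a b x : EuclideanSpace ℝ (Fin d)) : ℝ :=
  min (dist x a ^ 2) (dist x b ^ 2) / 2

/-- The quadratic form `w ↦ wᵀ H_i(x) w` of the local tensor
`H_i(x) = (1/D_i(x))(I - v vᵀ) + (1/D•_i(x)) v vᵀ`. -/
def tensorQ (a b v x w : EuclideanSpace ℝ (Fin d)) : ℝ :=
  (1 / Dseg a b x) * (‖w‖ ^ 2 - ⟪w, v⟫_ℝ ^ 2) + (1 / Dbullet a b x) * ⟪w, v⟫_ℝ ^ 2

/-- The local ellipsoid `E_i(x) = {y | ½ (y-x)ᵀ H_i(x) (y-x) ≤ 1}`. -/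
def localEllipsoid (a b v x : EuclideanSpace ℝ (Fin d)) :
    Set (EuclideanSpace ℝ (Fin d)) :=
  {y | tensorQ a b v x (y - x) / 2 ≤ 1}

/-- `Ê(x)`: the intersection of the local ellipsoids of all segments. -/
def hatE (a b v : Fin n → EuclideanSpace ℝ (Fin d)) (x : EuclideanSpace ℝ (Fin d)) :
    Set (EuclideanSpace ℝ (Fin d)) :=
  ⋂ i, localEllipsoid (a i) (b i) (v i) x

/-- `Ẽ(x)`: the ellipsoid of the blended tensor `H(x) = ∑ i, H_i(x)`. -/
def tildeE (a b v : Fin n → EuclideanSpace ℝ (Fin d)) (x : EuclideanSpace ℝ (Fin d)) :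
    Set (EuclideanSpace ℝ (Fin d)) :=
  {y | (∑ i, tensorQ (a i) (b i) (v i) x (y - x)) / 2 ≤ 1}

section Aux

variable {d : ℕ}

lemma norm_sub_proj_sq (v w : EuclideanSpace ℝ (Fin d)) (hv : ‖v‖ = 1) :
    ‖w - ⟪w, v⟫_ℝ • v‖ ^ 2 = ‖w‖ ^ 2 - ⟪w, v⟫_ℝ ^ 2 := by
  rw [norm_sub_sq_real, real_inner_smul_right, norm_smul, hv, mul_one, Real.norm_eq_abs, sq_abs]
  ring

lemma min_sq_eq (s t : ℝ) (hs : 0 ≤ s) (ht : 0 ≤ t) :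
    min (s ^ 2) (t ^ 2) = (min s t) ^ 2 := by
  rcases le_total s t with h | h
  · rw [min_eq_left h, min_eq_left (by nlinarith)]
  · rw [min_eq_right h, min_eq_right (by nlinarith)]

lemma tensorQ_eq (a b v x w : EuclideanSpace ℝ (Fin d)) (hv : ‖v‖ = 1) :
    tensorQ a b v x w =
      2 / (Metric.infDist x (segment ℝ a b)) ^ 2 * ‖w - ⟪w, v⟫_ℝ • v‖ ^ 2 +
        2 / (min (dist x a) (dist x b)) ^ 2 * ⟪w, v⟫_ℝ ^ 2 := by
  simp only [tensorQ, Dseg, Dbullet, one_div_div,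
    min_sq_eq _ _ dist_nonneg dist_nonneg, norm_sub_proj_sq v w hv]

lemma tensorQ_smul (a b v x w : EuclideanSpace ℝ (Fin d)) (c : ℝ) :
    tensorQ a b v x (c • w) = c ^ 2 * tensorQ a b v x w := by
  simp only [tensorQ, real_inner_smul_left, norm_smul, mul_pow, Real.norm_eq_abs, sq_abs]
  ring

lemma localEllipsoid_subset_capsuleSeg (a b v x : EuclideanSpace ℝ (Fin d)) (r : ℝ)
    (hv : ‖v‖ = 1) (hr0 : 0 < r) (hr : r ≤ Metric.infDist x (segment ℝ a b)) :
    localEllipsoid a b v x ⊆ capsuleSeg a b v x r := by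
  intro y hy
  set D := Metric.infDist x (segment ℝ a b) with hDdef
  set E := min (dist x a) (dist x b) with hEdef
  have hD : 0 < D := lt_of_lt_of_le hr0 hr
  have hDE : D ≤ E := le_min
    (Metric.infDist_le_dist_of_mem (left_mem_segment ℝ a b))
    (Metric.infDist_le_dist_of_mem (right_mem_segment ℝ a b))
  have hE : 0 < E := lt_of_lt_of_le hD hDE
  set w := y - x with hwdef
  set p := ⟪w, v⟫_ℝ with hpdef
  set q := ‖w - p • v‖ with hqdef
  have hq0 : 0 ≤ q := norm_nonneg _
  have hnorm : ‖w‖ ^ 2 = q ^ 2 + p ^ 2 := by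
    rw [hqdef, norm_sub_proj_sq v w hv]; ring
  have hy' : q ^ 2 / D ^ 2 + p ^ 2 / E ^ 2 ≤ 1 := by
    have h := hy
    simp only [localEllipsoid, mem_setOf_eq, tensorQ_eq a b v x (y - x) hv] at h
    have heq : (2 / D ^ 2 * q ^ 2 + 2 / E ^ 2 * p ^ 2) / 2
        = q ^ 2 / D ^ 2 + p ^ 2 / E ^ 2 := by ring
    rw [← hwdef, ← hpdef, ← hqdef, ← hDdef, ← hEdef, heq] at h
    exact h
  have hclear : q ^ 2 * E ^ 2 + p ^ 2 * D ^ 2 ≤ D ^ 2 * E ^ 2 := by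
    rw [div_add_div _ _ (by positivity : (D ^ 2 : ℝ) ≠ 0)
      (by positivity : (E ^ 2 : ℝ) ≠ 0), div_le_one (by positivity)] at hy'
    linarith
  have hp2 : p ^ 2 ≤ E ^ 2 := by
    nlinarith [mul_pos hD hD, mul_nonneg (sq_nonneg q) (sq_nonneg E)]
  have hq2 : q ^ 2 ≤ D ^ 2 := by
    nlinarith [mul_pos hE hE, mul_nonneg (sq_nonneg p) (sq_nonneg D)]
  have hDE2 : D ^ 2 ≤ E ^ 2 := by nlinarith
  have hw2 : ‖w‖ ^ 2 ≤ E ^ 2 := by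
    nlinarith [mul_pos hE hE, mul_nonneg (sub_nonneg.2 hp2) (sub_nonneg.2 hDE2)]
  have hwE : ‖w‖ ≤ E := by nlinarith [norm_nonneg w]
  have hdyx : dist y x = ‖w‖ := by rw [hwdef, dist_eq_norm]
  rw [capsuleSeg]
  split_ifs with hcond
  · rw [mem_closedBall, hdyx, ← hDdef]
    have : max r D = D := max_eq_right hr
    rw [this]
    rw [← hDdef, ← hEdef] at hcond
    rw [hcond]; exact hwE
  · constructor
    · show ‖(y - x) - ⟪y - x, v⟫_ℝ • v‖ ≤ max r D
      rw [← hwdef, ← hpdef, ← hqdef, max_eq_right hr]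
      nlinarith
    · rw [mem_closedBall, hdyx, ← hEdef, max_eq_right (hr.trans hDE)]
      exact hwE

lemma capsuleSeg_tensorQ_le (a b v x : EuclideanSpace ℝ (Fin d)) (r : ℝ)
    (hv : ‖v‖ = 1) (hr0 : 0 < r) (hr : r ≤ Metric.infDist x (segment ℝ a b)) :
    ∀ y ∈ capsuleSeg a b v x r, tensorQ a b v x (y - x) / 2 ≤ 2 := by
  intro y hy
  set D := Metric.infDist x (segment ℝ a b) with hDdef
  set E := min (dist x a) (dist x b) with hEdef
  have hD : 0 < D := lt_of_lt_of_le hr0 hr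
  have hDE : D ≤ E := le_min
    (Metric.infDist_le_dist_of_mem (left_mem_segment ℝ a b))
    (Metric.infDist_le_dist_of_mem (right_mem_segment ℝ a b))
  have hE : 0 < E := lt_of_lt_of_le hD hDE
  set w := y - x with hwdef
  set p := ⟪w, v⟫_ℝ with hpdef
  set q := ‖w - p • v‖ with hqdef
  have hq0 : 0 ≤ q := norm_nonneg _
  have hnorm : ‖w‖ ^ 2 = q ^ 2 + p ^ 2 := by
    rw [hqdef, norm_sub_proj_sq v w hv]; ring
  have hdyx : dist y x = ‖w‖ := by rw [hwdef, dist_eq_norm]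
  -- from the capsule membership derive q ≤ D and p^2 ≤ E^2
  have hkey : q ^ 2 ≤ D ^ 2 ∧ p ^ 2 ≤ E ^ 2 := by
    rw [capsuleSeg] at hy
    split_ifs at hy with hcond
    · rw [mem_closedBall, hdyx, ← hDdef, max_eq_right hr] at hy
      have hw2 : ‖w‖ ^ 2 ≤ D ^ 2 := by nlinarith [norm_nonneg w]
      constructor
      · nlinarith [sq_nonneg p]
      · nlinarith [sq_nonneg q, sq_nonneg (E - D)]
    · obtain ⟨h1, h2⟩ := hy
      rw [mem_closedBall, hdyx, ← hEdef, max_eq_right (hr.trans hDE)] at h2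
      have h1' : q ≤ D := by
        have := h1
        simp only [mem_setOf_eq, ← hwdef, ← hpdef, ← hqdef, ← hDdef] at this
        rwa [max_eq_right hr] at this
      constructor
      · nlinarith
      · nlinarith [sq_nonneg q, norm_nonneg w]
  obtain ⟨hq2, hp2⟩ := hkey
  have hQ : tensorQ a b v x w = 2 / D ^ 2 * q ^ 2 + 2 / E ^ 2 * p ^ 2 := by
    rw [tensorQ_eq a b v x w hv]
  rw [hQ]
  have h1 : q ^ 2 / D ^ 2 ≤ 1 := by rw [div_le_one (by positivity)]; exact hq2
  have h2 : p ^ 2 / E ^ 2 ≤ 1 := by rw [div_le_one (by positivity)]; exact hp2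
  have heq : (2 / D ^ 2 * q ^ 2 + 2 / E ^ 2 * p ^ 2) / 2
      = q ^ 2 / D ^ 2 + p ^ 2 / E ^ 2 := by ring
  rw [heq]; linarith

end Aux

/-- For `x` not on any segment and `0 < r ≤ min_i dist(x, s_i)`,
`Ê(x) ⊆ C(x, r) ⊆ Ê^{√2}(x)`. -/
theorem hatE_subset_capsule_subset_scaled_hatE {d n : ℕ} (hd : 1 ≤ d) (hn : 1 ≤ n)
    (a b v : Fin n → EuclideanSpace ℝ (Fin d))
    (hab : ∀ i, a i ≠ b i)
    (hv : ∀ i, ‖v i‖ = 1)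
    (hdir : ∀ i, b i - a i = ‖b i - a i‖ • v i)
    (hdisj : ∀ i j, i ≠ j → Disjoint (segment ℝ (a i) (b i)) (segment ℝ (a j) (b j)))
    (x : EuclideanSpace ℝ (Fin d)) (hx : ∀ i, x ∉ segment ℝ (a i) (b i))
    (r : ℝ) (hr0 : 0 < r)
    (hr : ∀ i, r ≤ Metric.infDist x (segment ℝ (a i) (b i))) :
    hatE a b v x ⊆ capsuleFam a b v x r ∧
      capsuleFam a b v x r ⊆ scaleAbout x (Real.sqrt 2) (hatE a b v x) := by
  constructor
  · intro y hy
    simp only [hatE, mem_iInter] at hy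
    simp only [capsuleFam, mem_iInter]
    intro i
    exact localEllipsoid_subset_capsuleSeg (a i) (b i) (v i) x r (hv i) hr0 (hr i) (hy i)
  · intro y hy
    simp only [capsuleFam, mem_iInter] at hy
    have hs2 : Real.sqrt 2 ≠ 0 := by positivity
    have hc2 : ((Real.sqrt 2)⁻¹) ^ 2 = (2 : ℝ)⁻¹ := by
      rw [inv_pow, Real.sq_sqrt (by norm_num : (0:ℝ) ≤ 2)]
    refine ⟨x + (Real.sqrt 2)⁻¹ • (y - x), ?_, ?_⟩
    · simp only [hatE, mem_iInter, localEllipsoid, mem_setOf_eq]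
      intro i
      have hQ := capsuleSeg_tensorQ_le (a i) (b i) (v i) x r (hv i) hr0 (hr i) y (hy i)
      have hsub : x + (Real.sqrt 2)⁻¹ • (y - x) - x = (Real.sqrt 2)⁻¹ • (y - x) :=
        add_sub_cancel_left x _
      rw [hsub, tensorQ_smul, hc2]
      linarith
    · rw [AffineMap.homothety_apply]
      simp only [vsub_eq_sub, vadd_eq_add, add_sub_cancel_left, smul_smul,
        mul_inv_cancel₀ hs2, one_smul, sub_add_cancel]
end
end

section
/- Let 0 < λ < 1 and x ∈ ℝᵈ, and let s_x ∈ S be a segment achieving the minimum of dist(x, s) over s ∈ S. Then for every z ∈ C^λ(x, φ(x)) and every segment s_z ∈ S achieving the minimum of dist(z, s) over s ∈ S, it holds that dist(z, s_x) ≤ ((1+λ)/(1−λ))·dist(z, s_z). -/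
noncomputable section

open Metric Set MeasureTheory
open scoped InnerProductSpace Classical

variable {d n : ℕ}

section AuxLemmas

variable {d : ℕ}
local notation "E" => EuclideanSpace ℝ (Fin d)

lemma le_infDist' {s : Set E} {x : E} {c : ℝ} (hs : s.Nonempty)
    (h : ∀ y ∈ s, c ≤ dist x y) : c ≤ Metric.infDist x s :=
  le_of_not_gt fun hlt => by
    obtain ⟨y, hy, hd⟩ := (Metric.infDist_lt_iff hs).1 hlt
    exact absurd (h y hy) (not_le.2 hd)

/-- distance from x to a point on the axis line, squared. -/
lemma dist_point_sq (a v x : E) (hv : ‖v‖ = 1) (t : ℝ) :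
    dist x (a + t • v) ^ 2
      = ‖(x - a) - ⟪x - a, v⟫_ℝ • v‖ ^ 2 + (⟪x - a, v⟫_ℝ - t) ^ 2 := by
  have hvv : ⟪v, v⟫_ℝ = 1 := by
    rw [real_inner_self_eq_norm_sq, hv]; norm_num
  set w := x - a with hw
  set t0 := ⟪w, v⟫_ℝ with ht0
  have hx : x - (a + t • v) = (w - t0 • v) + (t0 - t) • v := by
    rw [hw]; module
  have horth : ⟪w - t0 • v, (t0 - t) • v⟫_ℝ = 0 := by
    rw [real_inner_smul_right, inner_sub_left, real_inner_smul_left, hvv]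
    ring
  rw [dist_eq_norm, hx, norm_add_sq_real, horth, norm_smul]
  simp only [hv, mul_one, Real.norm_eq_abs, sq_abs]
  ring

lemma seg_eq (a b v : E) (hdir : b - a = ‖b - a‖ • v) :
    segment ℝ a b = (fun t : ℝ => a + t • v) '' Set.Icc (0:ℝ) ‖b - a‖ := by
  rw [segment_eq_image' ℝ a b]
  ext y
  constructor
  · rintro ⟨θ, ⟨h0, h1⟩, rfl⟩
    refine ⟨θ * ‖b - a‖, ⟨mul_nonneg h0 (norm_nonneg _),
      by nlinarith [norm_nonneg (b - a)]⟩, ?_⟩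
    show a + (θ * ‖b - a‖) • v = a + θ • (b - a)
    nth_rewrite 2 [hdir]
    rw [smul_smul]
  · rintro ⟨t, ⟨h0, hL⟩, rfl⟩
    rcases eq_or_lt_of_le (norm_nonneg (b - a)) with hz | hz
    · have ht : t = 0 := le_antisymm (by rw [← hz] at hL; exact hL) h0
      exact ⟨0, ⟨le_refl 0, zero_le_one⟩, by simp [ht]⟩
    · refine ⟨t / ‖b - a‖, ⟨div_nonneg h0 (norm_nonneg _),
        (div_le_one hz).2 hL⟩, ?_⟩
      show a + (t / ‖b - a‖) • (b - a) = a + t • v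
      nth_rewrite 2 [hdir]
      rw [smul_smul, div_mul_cancel₀ _ (ne_of_gt hz)]

lemma mem_seg_param {a b v : E} (hdir : b - a = ‖b - a‖ • v) {q : E}
    (hq : q ∈ segment ℝ a b) :
    ∃ t, t ∈ Set.Icc (0:ℝ) ‖b - a‖ ∧ q = a + t • v := by
  rw [seg_eq a b v hdir] at hq
  obtain ⟨t, ht, rfl⟩ := hq
  exact ⟨t, ht, rfl⟩

lemma param_mem_seg {a b v : E} (hdir : b - a = ‖b - a‖ • v) {t : ℝ}
    (ht : t ∈ Set.Icc (0:ℝ) ‖b - a‖) : a + t • v ∈ segment ℝ a b := by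
  rw [seg_eq a b v hdir]
  exact ⟨t, ht, rfl⟩

lemma sq_le_imp {x y : ℝ} (hy : 0 ≤ y) (h : x ^ 2 ≤ y ^ 2) (hx : 0 ≤ x) : x ≤ y := by
  nlinarith

lemma cyl_char (a b v x : E) (hv : ‖v‖ = 1) (hdir : b - a = ‖b - a‖ • v)
    (hne : Metric.infDist x (segment ℝ a b) ≠ min (dist x a) (dist x b)) :
    0 < ⟪x - a, v⟫_ℝ ∧ ⟪x - a, v⟫_ℝ < ‖b - a‖ ∧
    Metric.infDist x (segment ℝ a b) = ‖(x - a) - ⟪x - a, v⟫_ℝ • v‖ := by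
  have hρ0 : (0:ℝ) ≤ ‖(x - a) - ⟪x - a, v⟫_ℝ • v‖ := norm_nonneg _
  have hsne : (segment ℝ a b).Nonempty := ⟨a, left_mem_segment ℝ a b⟩
  have hb : b = a + ‖b - a‖ • v := by rw [← hdir]; abel
  have hda : dist x a ^ 2 = ‖(x - a) - ⟪x - a, v⟫_ℝ • v‖ ^ 2 + ⟪x - a, v⟫_ℝ ^ 2 := by
    have h := dist_point_sq a v x hv 0
    rw [show a + (0:ℝ) • v = a by simp, sub_zero] at h
    exact h
  have hdb : dist x b ^ 2
      = ‖(x - a) - ⟪x - a, v⟫_ℝ • v‖ ^ 2 + (⟪x - a, v⟫_ℝ - ‖b - a‖) ^ 2 := by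
    conv_lhs => rw [hb]
    exact dist_point_sq a v x hv ‖b - a‖
  have key : ∀ q ∈ segment ℝ a b, ∀ c : ℝ, 0 ≤ c →
      (∀ t ∈ Set.Icc (0:ℝ) ‖b - a‖,
        c ^ 2 ≤ ‖(x - a) - ⟪x - a, v⟫_ℝ • v‖ ^ 2 + (⟪x - a, v⟫_ℝ - t) ^ 2) →
      c ≤ dist x q := by
    intro q hq c hc0 hc
    obtain ⟨t, ht, rfl⟩ := mem_seg_param hdir hq
    refine sq_le_imp dist_nonneg ?_ hc0
    rw [dist_point_sq a v x hv t]
    exact hc t ht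
  rcases le_or_gt ⟪x - a, v⟫_ℝ 0 with hc1 | hc1
  · exfalso
    apply hne
    have h1 : Metric.infDist x (segment ℝ a b) = dist x a := by
      refine le_antisymm (Metric.infDist_le_dist_of_mem (left_mem_segment ℝ a b)) ?_
      refine le_infDist' hsne (fun q hq => key q hq _ dist_nonneg (fun t ht => ?_))
      rw [hda]
      nlinarith [ht.1]
    have h2 : dist x a ≤ dist x b := by
      refine sq_le_imp dist_nonneg ?_ dist_nonneg
      rw [hda, hdb]
      nlinarith [norm_nonneg (b - a)]
    rw [h1, min_eq_left h2]
  rcases le_or_gt ‖b - a‖ ⟪x - a, v⟫_ℝ with hc2 | hc2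
  · exfalso
    apply hne
    have h1 : Metric.infDist x (segment ℝ a b) = dist x b := by
      refine le_antisymm (Metric.infDist_le_dist_of_mem (right_mem_segment ℝ a b)) ?_
      refine le_infDist' hsne (fun q hq => key q hq _ dist_nonneg (fun t ht => ?_))
      rw [hdb]
      nlinarith [ht.2]
    have h2 : dist x b ≤ dist x a := by
      refine sq_le_imp dist_nonneg ?_ dist_nonneg
      rw [hda, hdb]
      nlinarith [norm_nonneg (b - a)]
    rw [h1, min_eq_right h2]
  refine ⟨hc1, hc2, le_antisymm ?_ ?_⟩
  · have hmem : a + ⟪x - a, v⟫_ℝ • v ∈ segment ℝ a b :=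
      param_mem_seg hdir ⟨le_of_lt hc1, le_of_lt hc2⟩
    have h1 := Metric.infDist_le_dist_of_mem (x := x) hmem
    have hd : dist x (a + ⟪x - a, v⟫_ℝ • v) = ‖(x - a) - ⟪x - a, v⟫_ℝ • v‖ := by
      have h2 := dist_point_sq a v x hv ⟪x - a, v⟫_ℝ
      rw [sub_self] at h2
      refine le_antisymm (sq_le_imp hρ0 (by rw [h2]; nlinarith) dist_nonneg)
        (sq_le_imp dist_nonneg (by rw [h2]; nlinarith) hρ0)
    rw [hd] at h1
    exact h1
  · exact le_infDist' hsne (fun q hq => key q hq _ hρ0 (fun t ht => by nlinarith))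

lemma norm_sq_decomp (v w : E) (hv : ‖v‖ = 1) :
    ‖w‖ ^ 2 = ‖w - ⟪w, v⟫_ℝ • v‖ ^ 2 + ⟪w, v⟫_ℝ ^ 2 := by
  have h1 : ⟪w - ⟪w, v⟫_ℝ • v, ⟪w, v⟫_ℝ • v⟫_ℝ = 0 := by
    rw [real_inner_smul_right, inner_sub_left, real_inner_smul_left,
      real_inner_self_eq_norm_sq, hv]
    ring
  calc ‖w‖ ^ 2 = ‖(w - ⟪w, v⟫_ℝ • v) + ⟪w, v⟫_ℝ • v‖ ^ 2 := by rw [sub_add_cancel]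
    _ = _ := by
        rw [norm_add_sq_real, h1, norm_smul]
        simp only [hv, mul_one, Real.norm_eq_abs, sq_abs, mul_zero]
        ring

lemma inner_shift (a x z v : E) :
    ⟪z - a, v⟫_ℝ = ⟪x - a, v⟫_ℝ + ⟪z - x, v⟫_ℝ := by
  rw [← inner_add_left]
  congr 1
  abel

lemma perp_shift (a x z v : E) :
    (z - a) - ⟪z - a, v⟫_ℝ • v
      = ((x - a) - ⟪x - a, v⟫_ℝ • v) + ((z - x) - ⟪z - x, v⟫_ℝ • v) := by
  rw [inner_shift a x z v, add_smul]
  abel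

/-- Lower bound on distance from `z` to the segment via the perpendicular
component, in the cylinder case. -/
lemma cyl_lower (a b v x z : E) (hv : ‖v‖ = 1) (hdir : b - a = ‖b - a‖ • v)
    (hne : Metric.infDist x (segment ℝ a b) ≠ min (dist x a) (dist x b))
    {c : ℝ} (hc : ‖(z - x) - ⟪z - x, v⟫_ℝ • v‖ ≤ c) :
    Metric.infDist x (segment ℝ a b) - c ≤ Metric.infDist z (segment ℝ a b) := by
  obtain ⟨_, _, hd⟩ := cyl_char a b v x hv hdir hne
  have hsne : (segment ℝ a b).Nonempty := ⟨a, left_mem_segment ℝ a b⟩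
  refine le_infDist' hsne (fun q hq => ?_)
  obtain ⟨t, ht, rfl⟩ := mem_seg_param hdir hq
  have h2 := dist_point_sq a v z hv t
  have h3 : ‖(x - a) - ⟪x - a, v⟫_ℝ • v‖ - c ≤ ‖(z - a) - ⟪z - a, v⟫_ℝ • v‖ := by
    rw [perp_shift a x z v]
    have h5 := norm_sub_le ((x - a) - ⟪x - a, v⟫_ℝ • v + ((z - x) - ⟪z - x, v⟫_ℝ • v))
      ((z - x) - ⟪z - x, v⟫_ℝ • v)
    simp only [add_sub_cancel_right] at h5
    linarith
  rw [hd]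
  rcases le_or_gt (‖(x - a) - ⟪x - a, v⟫_ℝ • v‖ - c) 0 with h4 | h4
  · exact le_trans h4 dist_nonneg
  · refine sq_le_imp dist_nonneg ?_ (le_of_lt h4)
    rw [h2]
    nlinarith [norm_nonneg ((z - a) - ⟪z - a, v⟫_ℝ • v)]

lemma maxsq_scalar (φ da db ρ t0 L : ℝ) (hρ0 : 0 ≤ ρ) (hρφ : ρ ≤ φ)
    (hda : da ^ 2 = ρ ^ 2 + t0 ^ 2) (hdb : db ^ 2 = ρ ^ 2 + (t0 - L) ^ 2)
    (hda0 : 0 ≤ da) (hdb0 : 0 ≤ db) (hφ0 : 0 ≤ φ) :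
    (max φ (min da db)) ^ 2 ≤ φ ^ 2 + (min t0 (L - t0)) ^ 2 := by
  rcases max_cases φ (min da db) with ⟨h1, _⟩ | ⟨h1, _⟩ <;> rw [h1]
  · nlinarith [sq_nonneg (min t0 (L - t0))]
  · rcases min_cases da db with ⟨h2, _⟩ | ⟨h2, _⟩ <;> rw [h2] <;>
      rcases min_cases t0 (L - t0) with ⟨h3, h4⟩ | ⟨h3, h4⟩ <;> rw [h3]
    · nlinarith
    · nlinarith
    · nlinarith
    · nlinarith

lemma cyl_upper_scalar (φ lam t0 L τ c P : ℝ)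
    (ht1 : 0 < t0) (ht2 : t0 < L) (hφ0 : 0 ≤ φ)
    (hlam0 : 0 ≤ lam) (hlam1 : lam ≤ 1)
    (hc0 : 0 ≤ c) (hcφ : c ≤ lam * φ)
    (hP0 : 0 ≤ P) (hP : P ≤ φ + c)
    (husq : c ^ 2 + τ ^ 2 ≤ lam ^ 2 * (φ ^ 2 + (min t0 (L - t0)) ^ 2)) :
    P ^ 2 + (t0 + τ - max 0 (min (t0 + τ) L)) ^ 2 ≤ ((1 + lam) * φ) ^ 2 := by
  have hμ1 : min t0 (L - t0) ≤ t0 := min_le_left _ _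
  have hμ2 : min t0 (L - t0) ≤ L - t0 := min_le_right _ _
  have hμ0 : 0 ≤ min t0 (L - t0) := le_min (le_of_lt ht1) (by linarith)
  have hkey : (t0 + τ - max 0 (min (t0 + τ) L)) ^ 2 + c ^ 2 ≤ lam ^ 2 * φ ^ 2 := by
    rcases le_or_gt (t0 + τ) 0 with hcase | hcase
    · have hs0 : max 0 (min (t0 + τ) L) = 0 := by
        rw [max_eq_left]
        exact le_trans (min_le_left _ _) hcase
      rw [hs0, sub_zero]
      have hA : (t0 + τ) ^ 2 ≤ (τ + min t0 (L - t0)) ^ 2 := by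
        nlinarith [mul_nonneg (show (0:ℝ) ≤ t0 - min t0 (L - t0) by linarith)
          (show (0:ℝ) ≤ -2 * τ - t0 - min t0 (L - t0) by linarith)]
      have hB : τ * (min t0 (L - t0)) ≤ (-(min t0 (L - t0))) * (min t0 (L - t0)) :=
        mul_le_mul_of_nonneg_right (by linarith) hμ0
      have hC : lam ^ 2 * (min t0 (L - t0)) ^ 2 ≤ (min t0 (L - t0)) ^ 2 := by
        nlinarith [mul_nonneg (show (0:ℝ) ≤ 1 - lam ^ 2 by nlinarith)
          (sq_nonneg (min t0 (L - t0)))]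
      linarith
    · rcases le_or_gt L (t0 + τ) with hcase2 | hcase2
      · have hs0 : max 0 (min (t0 + τ) L) = L := by
          rw [min_eq_right hcase2, max_eq_right (by linarith)]
        rw [hs0]
        have h1 : min t0 (L - t0) ≤ τ := le_trans hμ2 (by linarith)
        have hA : (t0 + τ - L) ^ 2 ≤ (τ - min t0 (L - t0)) ^ 2 := by
          nlinarith [mul_nonneg (show (0:ℝ) ≤ (L - t0) - min t0 (L - t0) by linarith)
            (show (0:ℝ) ≤ 2 * τ - (L - t0) - min t0 (L - t0) by linarith)]
        have hB : (min t0 (L - t0)) * (min t0 (L - t0)) ≤ τ * (min t0 (L - t0)) :=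
          mul_le_mul_of_nonneg_right h1 hμ0
        have hC : lam ^ 2 * (min t0 (L - t0)) ^ 2 ≤ (min t0 (L - t0)) ^ 2 := by
          nlinarith [mul_nonneg (show (0:ℝ) ≤ 1 - lam ^ 2 by nlinarith)
            (sq_nonneg (min t0 (L - t0)))]
        linarith
      · have hs0 : max 0 (min (t0 + τ) L) = t0 + τ := by
          rw [min_eq_left (le_of_lt hcase2), max_eq_right (le_of_lt hcase)]
        rw [hs0, sub_self]
        nlinarith [pow_le_pow_left₀ hc0 hcφ 2]
  have h1 : P ^ 2 ≤ (φ + c) ^ 2 := pow_le_pow_left₀ hP0 hP 2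
  have h2 : φ * c ≤ φ * (lam * φ) := mul_le_mul_of_nonneg_left hcφ hφ0
  linarith

/-- Upper bound on distance from `z` to the segment, in the cylinder case. -/
lemma cyl_upper (a b v x z : E) (hv : ‖v‖ = 1) (hdir : b - a = ‖b - a‖ • v)
    (hne : Metric.infDist x (segment ℝ a b) ≠ min (dist x a) (dist x b))
    {φ lam : ℝ} (hφ : Metric.infDist x (segment ℝ a b) ≤ φ)
    (hlam0 : 0 ≤ lam) (hlam1 : lam ≤ 1)
    (hperp : ‖(z - x) - ⟪z - x, v⟫_ℝ • v‖ ≤ lam * φ)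
    (hball : ‖z - x‖ ≤ lam * max φ (min (dist x a) (dist x b))) :
    Metric.infDist z (segment ℝ a b) ≤ (1 + lam) * φ := by
  obtain ⟨ht1, ht2, hd⟩ := cyl_char a b v x hv hdir hne
  have hρ0 : (0:ℝ) ≤ ‖(x - a) - ⟪x - a, v⟫_ℝ • v‖ := norm_nonneg _
  have hφ' : ‖(x - a) - ⟪x - a, v⟫_ℝ • v‖ ≤ φ := hd ▸ hφ
  have hφ0 : (0:ℝ) ≤ φ := le_trans hρ0 hφ'
  have hc0 : (0:ℝ) ≤ ‖(z - x) - ⟪z - x, v⟫_ℝ • v‖ := norm_nonneg _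
  -- endpoint distances
  have hda : dist x a ^ 2 = ‖(x - a) - ⟪x - a, v⟫_ℝ • v‖ ^ 2 + ⟪x - a, v⟫_ℝ ^ 2 := by
    have h := dist_point_sq a v x hv 0
    rw [show a + (0:ℝ) • v = a by simp, sub_zero] at h
    exact h
  have hb : b = a + ‖b - a‖ • v := by rw [← hdir]; abel
  have hdb : dist x b ^ 2
      = ‖(x - a) - ⟪x - a, v⟫_ℝ • v‖ ^ 2 + (⟪x - a, v⟫_ℝ - ‖b - a‖) ^ 2 := by
    conv_lhs => rw [hb]
    exact dist_point_sq a v x hv ‖b - a‖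
  -- norm decomposition of u = z - x
  have hu : ‖z - x‖ ^ 2 = ‖(z - x) - ⟪z - x, v⟫_ℝ • v‖ ^ 2 + ⟪z - x, v⟫_ℝ ^ 2 :=
    norm_sq_decomp v (z - x) hv
  -- bound on (max φ m)²
  have hdb' : dist x b ^ 2 = ‖(x - a) - ⟪x - a, v⟫_ℝ • v‖ ^ 2
      + (⟪x - a, v⟫_ℝ - ‖b - a‖) ^ 2 := hdb
  have hmaxsq : (max φ (min (dist x a) (dist x b))) ^ 2
      ≤ φ ^ 2 + (min ⟪x - a, v⟫_ℝ (‖b - a‖ - ⟪x - a, v⟫_ℝ)) ^ 2 :=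
    maxsq_scalar φ (dist x a) (dist x b) ‖(x - a) - ⟪x - a, v⟫_ℝ • v‖
      ⟪x - a, v⟫_ℝ ‖b - a‖ hρ0 hφ' hda hdb' dist_nonneg dist_nonneg hφ0
  -- squared ball bound
  have humax : ‖z - x‖ ^ 2 ≤ lam ^ 2 *
      (φ ^ 2 + (min ⟪x - a, v⟫_ℝ (‖b - a‖ - ⟪x - a, v⟫_ℝ)) ^ 2) := by
    have h2 : ‖z - x‖ ^ 2 ≤ (lam * max φ (min (dist x a) (dist x b))) ^ 2 :=
      pow_le_pow_left₀ (norm_nonneg _) hball 2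
    refine le_trans h2 ?_
    rw [mul_pow]
    exact mul_le_mul_of_nonneg_left hmaxsq (sq_nonneg lam)
  have husq : ‖(z - x) - ⟪z - x, v⟫_ℝ • v‖ ^ 2 + ⟪z - x, v⟫_ℝ ^ 2 ≤ lam ^ 2 *
      (φ ^ 2 + (min ⟪x - a, v⟫_ℝ (‖b - a‖ - ⟪x - a, v⟫_ℝ)) ^ 2) := by
    rw [← hu]; exact humax
  -- the clamped parameter
  have hsIcc : max 0 (min (⟪x - a, v⟫_ℝ + ⟪z - x, v⟫_ℝ) ‖b - a‖)
      ∈ Set.Icc (0:ℝ) ‖b - a‖ := by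
    constructor
    · exact le_max_left _ _
    · rcases max_cases (0:ℝ) (min (⟪x - a, v⟫_ℝ + ⟪z - x, v⟫_ℝ) ‖b - a‖) with
        ⟨h1, _⟩ | ⟨h1, _⟩ <;> rw [h1]
      · linarith
      · exact min_le_right _ _
  have hqmem := param_mem_seg hdir hsIcc
  have hle := Metric.infDist_le_dist_of_mem (x := z) hqmem
  -- distance formula for z, with perpendicular split through x
  have hz2 := dist_point_sq a v z hv (max 0 (min (⟪x - a, v⟫_ℝ + ⟪z - x, v⟫_ℝ) ‖b - a‖))
  rw [perp_shift a x z v, inner_shift a x z v] at hz2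
  have hzperp : ‖((x - a) - ⟪x - a, v⟫_ℝ • v) + ((z - x) - ⟪z - x, v⟫_ℝ • v)‖
      ≤ φ + ‖(z - x) - ⟪z - x, v⟫_ℝ • v‖ := by
    refine le_trans (norm_add_le _ _) ?_
    linarith
  have hfin : dist z (a + (max 0 (min (⟪x - a, v⟫_ℝ + ⟪z - x, v⟫_ℝ) ‖b - a‖)) • v) ^ 2
      ≤ ((1 + lam) * φ) ^ 2 := by
    rw [hz2]
    exact cyl_upper_scalar φ lam ⟪x - a, v⟫_ℝ ‖b - a‖ ⟪z - x, v⟫_ℝ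
      ‖(z - x) - ⟪z - x, v⟫_ℝ • v‖
      ‖((x - a) - ⟪x - a, v⟫_ℝ • v) + ((z - x) - ⟪z - x, v⟫_ℝ • v)‖
      ht1 ht2 hφ0 hlam0 hlam1 hc0 hperp (norm_nonneg _) hzperp husq
  exact le_trans hle (sq_le_imp (mul_nonneg (by linarith) hφ0) hfin dist_nonneg)

end AuxLemmas

/-- If `s_x` is a nearest segment of `x`, then for every
`z ∈ C^λ(x, φ(x))` and any nearest segment `s_z` of `z`,
`dist(z, s_x) ≤ ((1+λ)/(1−λ))·dist(z, s_z)`. -/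
theorem capsule_center_representative_approx {d n : ℕ} (hd : 1 ≤ d) (hn : 2 ≤ n)
    (a b v : Fin n → EuclideanSpace ℝ (Fin d))
    (hab : ∀ i, a i ≠ b i)
    (hv : ∀ i, ‖v i‖ = 1)
    (hdir : ∀ i, b i - a i = ‖b i - a i‖ • v i)
    (hdisj : ∀ i j, i ≠ j → Disjoint (segment ℝ (a i) (b i)) (segment ℝ (a j) (b j)))
    (lam : ℝ) (hlam0 : 0 < lam) (hlam1 : lam < 1)
    (x : EuclideanSpace ℝ (Fin d))
    (kx : Fin n)
    (hkx : ∀ i, Metric.infDist x (segment ℝ (a kx) (b kx)) ≤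
      Metric.infDist x (segment ℝ (a i) (b i)))
    (z : EuclideanSpace ℝ (Fin d))
    (hz : z ∈ scaleAbout x lam (capsuleFam a b v x (lfs a b x)))
    (kz : Fin n)
    (hkz : ∀ i, Metric.infDist z (segment ℝ (a kz) (b kz)) ≤
      Metric.infDist z (segment ℝ (a i) (b i))) :
    Metric.infDist z (segment ℝ (a kx) (b kx)) ≤
      ((1 + lam) / (1 - lam)) * Metric.infDist z (segment ℝ (a kz) (b kz)) := by
  classical
  have hlam1' : (0:ℝ) < 1 - lam := by linarith
  rw [div_mul_eq_mul_div, le_div_iff₀ hlam1']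
  -- notation
  set dx := Metric.infDist x (segment ℝ (a kx) (b kx)) with hdx
  set dz := Metric.infDist x (segment ℝ (a kz) (b kz)) with hdz
  set dzx := Metric.infDist z (segment ℝ (a kx) (b kx)) with hdzx
  set dzz := Metric.infDist z (segment ℝ (a kz) (b kz)) with hdzz
  have hdzx0 : 0 ≤ dzx := Metric.infDist_nonneg
  have hdzz0 : 0 ≤ dzz := Metric.infDist_nonneg
  have hdx0 : 0 ≤ dx := Metric.infDist_nonneg
  by_cases hkk : kz = kx
  · subst hkk
    have he : dzx = dzz := by rw [hdzx, hdzz]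
    nlinarith [mul_nonneg (le_of_lt hlam0) hdzx0]
  -- lfs facts
  have hTne : {t | ∃ i j : Fin n, i < j ∧
      t = max (Metric.infDist x (segment ℝ (a i) (b i)))
              (Metric.infDist x (segment ℝ (a j) (b j)))}.Nonempty := by
    refine ⟨_, ⟨⟨0, by omega⟩, ⟨1, by omega⟩, ?_, rfl⟩⟩
    rw [Fin.mk_lt_mk]
    omega
  have hTbdd : BddBelow {t | ∃ i j : Fin n, i < j ∧
      t = max (Metric.infDist x (segment ℝ (a i) (b i)))
              (Metric.infDist x (segment ℝ (a j) (b j)))} := by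
    refine ⟨0, ?_⟩
    rintro t ⟨i, j, _, rfl⟩
    exact le_max_of_le_left Metric.infDist_nonneg
  have hφ_ge : dx ≤ lfs a b x := by
    refine le_csInf hTne ?_
    rintro t ⟨i, j, _, rfl⟩
    exact le_max_of_le_left (hkx i)
  have hφ0 : 0 ≤ lfs a b x := le_trans hdx0 hφ_ge
  have hφ_le : lfs a b x ≤ dz := by
    rcases lt_or_gt_of_ne hkk with hlt | hlt
    · have h1 := csInf_le hTbdd ⟨kz, kx, hlt, rfl⟩
      rw [max_eq_left (hkx kz)] at h1
      exact h1
    · have h1 := csInf_le hTbdd ⟨kx, kz, hlt, rfl⟩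
      rw [max_eq_right (hkx kz)] at h1
      exact h1
  have hdz0 : 0 ≤ dz := le_trans hφ0 hφ_le
  -- unpack the scaled capsule membership
  obtain ⟨y, hy, hzeq⟩ := hz
  have hu : z - x = lam • (y - x) := by
    rw [← hzeq, AffineMap.homothety_apply, vsub_eq_sub, vadd_eq_add,
      add_sub_cancel_right]
  have hunorm : ‖z - x‖ = lam * ‖y - x‖ := by
    rw [hu, norm_smul, Real.norm_eq_abs, abs_of_pos hlam0]
  have huperp : ∀ i : Fin n, ‖(z - x) - ⟪z - x, v i⟫_ℝ • v i‖
      = lam * ‖(y - x) - ⟪y - x, v i⟫_ℝ • v i‖ := by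
    intro i
    have h1 : (z - x) - ⟪z - x, v i⟫_ℝ • v i
        = lam • ((y - x) - ⟪y - x, v i⟫_ℝ • v i) := by
      rw [hu, real_inner_smul_left]
      module
    rw [h1, norm_smul, Real.norm_eq_abs, abs_of_pos hlam0]
  have hykx : y ∈ capsuleSeg (a kx) (b kx) (v kx) x (lfs a b x) :=
    Set.mem_iInter.1 hy kx
  have hykz : y ∈ capsuleSeg (a kz) (b kz) (v kz) x (lfs a b x) :=
    Set.mem_iInter.1 hy kz
  -- triangle inequality facts
  have htri1 : dzx ≤ dx + ‖z - x‖ := by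
    rw [hdzx, hdx, ← dist_eq_norm]
    exact Metric.infDist_le_infDist_add_dist
  have htri2 : dz ≤ dzz + ‖z - x‖ := by
    rw [hdz, hdzz, ← norm_sub_rev, ← dist_eq_norm]
    exact Metric.infDist_le_infDist_add_dist
  -- case analysis on the capsule shape of s_kz
  by_cases hckz : Metric.infDist x (segment ℝ (a kz) (b kz))
      = min (dist x (a kz)) (dist x (b kz))
  · -- ball case for kz
    rw [capsuleSeg, if_pos hckz] at hykz
    have h1 : ‖y - x‖ ≤ max (lfs a b x) dz := by
      rw [← dist_eq_norm]
      exact Metric.mem_closedBall.1 hykz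
    rw [max_eq_right hφ_le] at h1
    have h2 : ‖z - x‖ ≤ lam * dz := by
      rw [hunorm]
      exact mul_le_mul_of_nonneg_left h1 (le_of_lt hlam0)
    nlinarith
  · -- cylinder case for kz : lower bound via the perpendicular component
    rw [capsuleSeg, if_neg hckz] at hykz
    have h1 : ‖(y - x) - ⟪y - x, v kz⟫_ℝ • v kz‖ ≤ max (lfs a b x) dz := hykz.1
    rw [max_eq_right hφ_le] at h1
    have h2 : ‖(z - x) - ⟪z - x, v kz⟫_ℝ • v kz‖ ≤ lam * dz := by
      rw [huperp kz]
      exact mul_le_mul_of_nonneg_left h1 (le_of_lt hlam0)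
    have hlow : dz - lam * dz ≤ dzz :=
      cyl_lower (a kz) (b kz) (v kz) x z (hv kz) (hdir kz) hckz h2
    -- now bound dzx from above by (1+lam) * lfs
    have hupper : dzx ≤ (1 + lam) * lfs a b x := by
      by_cases hckx : Metric.infDist x (segment ℝ (a kx) (b kx))
          = min (dist x (a kx)) (dist x (b kx))
      · -- ball case for kx
        rw [capsuleSeg, if_pos hckx] at hykx
        have h3 : ‖y - x‖ ≤ max (lfs a b x) dx := by
          rw [← dist_eq_norm]
          exact Metric.mem_closedBall.1 hykx
        rw [max_eq_left hφ_ge] at h3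
        have h4 : ‖z - x‖ ≤ lam * lfs a b x := by
          rw [hunorm]
          exact mul_le_mul_of_nonneg_left h3 (le_of_lt hlam0)
        nlinarith
      · -- cylinder case for kx
        rw [capsuleSeg, if_neg hckx] at hykx
        have h3 : ‖(y - x) - ⟪y - x, v kx⟫_ℝ • v kx‖ ≤ max (lfs a b x) dx := hykx.1
        rw [max_eq_left hφ_ge] at h3
        have h4 : ‖(z - x) - ⟪z - x, v kx⟫_ℝ • v kx‖ ≤ lam * lfs a b x := by
          rw [huperp kx]
          exact mul_le_mul_of_nonneg_left h3 (le_of_lt hlam0)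
        have h5 : ‖y - x‖ ≤ max (lfs a b x) (min (dist x (a kx)) (dist x (b kx))) := by
          rw [← dist_eq_norm]
          exact Metric.mem_closedBall.1 hykx.2
        have h6 : ‖z - x‖
            ≤ lam * max (lfs a b x) (min (dist x (a kx)) (dist x (b kx))) := by
          rw [hunorm]
          exact mul_le_mul_of_nonneg_left h5 (le_of_lt hlam0)
        exact cyl_upper (a kx) (b kx) (v kx) x z (hv kx) (hdir kx) hckx hφ_ge
          (le_of_lt hlam0) (le_of_lt hlam1) h4 h6
    have hc1 := mul_le_mul_of_nonneg_left hupper (le_of_lt hlam1')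
    have hc2 := mul_le_mul_of_nonneg_left hlow (show (0:ℝ) ≤ 1 + lam by linarith)
    have hc3 := mul_le_mul_of_nonneg_left hφ_le
      (show (0:ℝ) ≤ (1 - lam) * (1 + lam) by nlinarith)
    nlinarith [hc1, hc2, hc3]
end
end
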